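/- Let n ≥ 1, let τ, κ₀ be real numbers, let R be a curvature-type tensor, and let T be a torsion-type tensor that is antisymmetric in its first two arguments (T i k r = − T k i r for all i, k, r). Suppose that for every Hermitian positive semidefinite matrix ξ : Matrix (Fin n) (Fin n) ℂ one has ∑_{i,j,k,l} (R i j k l − ((1−τ)/4) · ∑_r T i k r · conj (T j l r)) · ξ i j · ξ k l = κ₀ · ∑_{i,j} ξ i j · ξ j i. Then for all indices i, j, k, l: R i j k l + R k l i j = 2 κ₀ · (if i = l ∧ k = j then 1 else 0) + ((1−τ)/2) · ∑_r T i k r · conj (T j l r). -/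

import Mathlib

open scoped ComplexOrder
open Finset

private lemma sum_comm4 {n : ℕ} {α : Type*} [AddCommMonoid α]
    (f : Fin n → Fin n → Fin n → Fin n → α) :
    ∑ i, ∑ j, ∑ k, ∑ l, f i j k l = ∑ k, ∑ l, ∑ i, ∑ j, f i j k l := by
  calc ∑ i, ∑ j, ∑ k, ∑ l, f i j k l
      = ∑ i, ∑ k, ∑ j, ∑ l, f i j k l :=
        Finset.sum_congr rfl fun i _ => Finset.sum_comm
    _ = ∑ k, ∑ i, ∑ j, ∑ l, f i j k l := Finset.sum_comm
    _ = ∑ k, ∑ i, ∑ l, ∑ j, f i j k l :=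
        Finset.sum_congr rfl fun k _ => Finset.sum_congr rfl fun i _ => Finset.sum_comm
    _ = ∑ k, ∑ l, ∑ i, ∑ j, f i j k l :=
        Finset.sum_congr rfl fun k _ => Finset.sum_comm

private lemma outer_psd {n : ℕ} (v : Fin n → ℂ) :
    (Matrix.of fun i j => v i * (starRingEnd ℂ) (v j)).PosSemidef := by
  refine Matrix.PosSemidef.of_dotProduct_mulVec_nonneg ?_ ?_
  · ext i j
    simp [Matrix.conjTranspose_apply, mul_comm]
  · intro x
    have hsum : dotProduct (star x)
        (Matrix.mulVec (Matrix.of fun i j => v i * (starRingEnd ℂ) (v j)) x)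
        = star (∑ j, (starRingEnd ℂ) (v j) * x j) * (∑ j, (starRingEnd ℂ) (v j) * x j) := by
      simp only [Matrix.mulVec, dotProduct, Matrix.of_apply, Pi.star_apply, star_sum,
        star_mul', RCLike.star_def, Complex.conj_conj, Finset.sum_mul_sum, Finset.mul_sum,
        Finset.sum_mul]
      rw [Finset.sum_comm]
      refine Finset.sum_congr rfl fun i _ => Finset.sum_congr rfl fun j _ => ?_
      ring
    rw [hsum]
    exact star_mul_self_nonneg _

private lemma sesq_zero {n : ℕ} (M : Fin n → Fin n → ℂ)
    (h : ∀ v : Fin n → ℂ, ∑ i, ∑ j, M i j * v i * (starRingEnd ℂ) (v j) = 0)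
    (i j : Fin n) : M i j = 0 := by
  have hdiag : ∀ t : Fin n, M t t = 0 := by
    intro t
    have := h (fun s => if s = t then 1 else 0)
    simpa [apply_ite (starRingEnd ℂ), mul_ite, ite_mul, Finset.sum_ite_eq'] using this
  rcases eq_or_ne i j with rfl | hij
  · exact hdiag i
  · have key : ∀ a b : ℂ, M i j * (a * (starRingEnd ℂ) b) + M j i * (b * (starRingEnd ℂ) a) = 0 := by
      intro a b
      have := h (fun s => if s = i then a else if s = j then b else 0)
      rw [show (∑ s, ∑ t, M s t * (if s = i then a else if s = j then b else 0) *
            (starRingEnd ℂ) (if t = i then a else if t = j then b else 0))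
          = M i i * (a * (starRingEnd ℂ) a) + M i j * (a * (starRingEnd ℂ) b)
            + (M j i * (b * (starRingEnd ℂ) a) + M j j * (b * (starRingEnd ℂ) b)) from ?_] at this
      · rw [hdiag i, hdiag j] at this
        linear_combination this
      · rw [← Finset.sum_subset (Finset.subset_univ ({i, j} : Finset (Fin n)))
          (by intro t _ ht
              simp only [Finset.mem_insert, Finset.mem_singleton, not_or] at ht
              simp [ht.1, ht.2])]
        rw [Finset.sum_pair hij]
        congr 1
        · rw [← Finset.sum_subset (Finset.subset_univ ({i, j} : Finset (Fin n)))
            (by intro t _ ht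
                simp only [Finset.mem_insert, Finset.mem_singleton, not_or] at ht
                simp [ht.1, ht.2])]
          rw [Finset.sum_pair hij]
          simp only [if_pos rfl, if_neg hij, if_neg hij.symm, if_true, ite_true]
          ring
        · rw [← Finset.sum_subset (Finset.subset_univ ({i, j} : Finset (Fin n)))
            (by intro t _ ht
                simp only [Finset.mem_insert, Finset.mem_singleton, not_or] at ht
                simp [ht.1, ht.2])]
          rw [Finset.sum_pair hij]
          simp only [if_pos rfl, if_neg hij, if_neg hij.symm, if_true, ite_true]
          ring
    have h1 := key 1 1
    have h2 := key 1 Complex.I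
    simp only [map_one, mul_one, one_mul, Complex.conj_I] at h1 h2
    have hI : Complex.I ^ 2 = -1 := Complex.I_sq
    have h3 : M i j - M j i = 0 := by
      linear_combination Complex.I * h2 + (M i j - M j i) * hI
    linear_combination (h1 + h3) / 2


/-- Polarization identity (2.6) in the proof of Proposition 2.4: if the tempered real
bisectional curvature at parameter `τ` is pointwise constant equal to `κ₀`, then the
symmetrized curvature components are determined by `κ₀` and the torsion. -/
theorem constant_tempered_RBC_polarization (n : ℕ) (hn : 1 ≤ n) (τ κ₀ : ℝ)
    (R : Fin n → Fin n → Fin n → Fin n → ℂ)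
    (T : Fin n → Fin n → Fin n → ℂ)
    (hT : ∀ i k r : Fin n, T i k r = - T k i r)
    (hconst : ∀ ξ : Matrix (Fin n) (Fin n) ℂ, ξ.PosSemidef →
      (∑ i : Fin n, ∑ j : Fin n, ∑ k : Fin n, ∑ l : Fin n,
        (R i j k l - (((1 - τ)/4 : ℝ) : ℂ)
            * ∑ r : Fin n, T i k r * (starRingEnd ℂ) (T j l r)) * ξ i j * ξ k l)
      = (κ₀ : ℂ) * ∑ i : Fin n, ∑ j : Fin n, ξ i j * ξ j i) :
    ∀ i j k l : Fin n,
      R i j k l + R k l i j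
        = 2 * (κ₀ : ℂ) * (if i = l ∧ k = j then 1 else 0)
          + (((1 - τ)/2 : ℝ) : ℂ) * ∑ r : Fin n, T i k r * (starRingEnd ℂ) (T j l r) := by
  set c : ℂ := (((1 - τ)/4 : ℝ) : ℂ) with hc_def
  -- bilinear (polarized) version of the hypothesis
  have hbil : ∀ ξ η : Matrix (Fin n) (Fin n) ℂ, ξ.PosSemidef → η.PosSemidef →
      (∑ i : Fin n, ∑ j : Fin n, ∑ k : Fin n, ∑ l : Fin n,
        (R i j k l - c * ∑ r : Fin n, T i k r * (starRingEnd ℂ) (T j l r)) * ξ i j * η k l)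
      + (∑ i : Fin n, ∑ j : Fin n, ∑ k : Fin n, ∑ l : Fin n,
        (R i j k l - c * ∑ r : Fin n, T i k r * (starRingEnd ℂ) (T j l r)) * η i j * ξ k l)
      = (κ₀ : ℂ) * ((∑ i : Fin n, ∑ j : Fin n, ξ i j * η j i)
          + ∑ i : Fin n, ∑ j : Fin n, η i j * ξ j i) := by
    intro ξ η hξ hη
    have h1 := hconst ξ hξ
    have h2 := hconst η hη
    have h3 := hconst (ξ + η) (hξ.add hη)
    simp only [Matrix.add_apply, mul_add, add_mul, Finset.sum_add_distrib] at h3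
    linear_combination h3 - h1 - h2
  -- rank-one version
  have hv : ∀ v w : Fin n → ℂ,
      (∑ i : Fin n, ∑ j : Fin n, ∑ k : Fin n, ∑ l : Fin n,
        (R i j k l - c * ∑ r : Fin n, T i k r * (starRingEnd ℂ) (T j l r))
          * (v i * (starRingEnd ℂ) (v j)) * (w k * (starRingEnd ℂ) (w l)))
      + (∑ i : Fin n, ∑ j : Fin n, ∑ k : Fin n, ∑ l : Fin n,
        (R i j k l - c * ∑ r : Fin n, T i k r * (starRingEnd ℂ) (T j l r))
          * (w i * (starRingEnd ℂ) (w j)) * (v k * (starRingEnd ℂ) (v l)))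
      = (κ₀ : ℂ) * ((∑ i : Fin n, ∑ j : Fin n,
            (v i * (starRingEnd ℂ) (v j)) * (w j * (starRingEnd ℂ) (w i)))
          + ∑ i : Fin n, ∑ j : Fin n,
            (w i * (starRingEnd ℂ) (w j)) * (v j * (starRingEnd ℂ) (v i))) := by
    intro v w
    simpa using hbil (Matrix.of fun i j => v i * (starRingEnd ℂ) (v j))
      (Matrix.of fun i j => w i * (starRingEnd ℂ) (w j)) (outer_psd v) (outer_psd w)
  -- the symmetrized coefficient tensor vanishes
  have hB : ∀ i j k l : Fin n,
      (R i j k l - c * ∑ r : Fin n, T i k r * (starRingEnd ℂ) (T j l r))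
      + (R k l i j - c * ∑ r : Fin n, T k i r * (starRingEnd ℂ) (T l j r))
      - 2 * (κ₀ : ℂ) * (if i = l ∧ k = j then 1 else 0) = 0 := by
    have step1 : ∀ (v : Fin n → ℂ) (k l : Fin n),
        ∑ i : Fin n, ∑ j : Fin n,
          ((R i j k l - c * ∑ r : Fin n, T i k r * (starRingEnd ℂ) (T j l r))
           + (R k l i j - c * ∑ r : Fin n, T k i r * (starRingEnd ℂ) (T l j r))
           - 2 * (κ₀ : ℂ) * (if i = l ∧ k = j then 1 else 0))
          * v i * (starRingEnd ℂ) (v j) = 0 := by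
      intro v k l
      refine sesq_zero (fun k l => ∑ i : Fin n, ∑ j : Fin n,
          ((R i j k l - c * ∑ r : Fin n, T i k r * (starRingEnd ℂ) (T j l r))
           + (R k l i j - c * ∑ r : Fin n, T k i r * (starRingEnd ℂ) (T l j r))
           - 2 * (κ₀ : ℂ) * (if i = l ∧ k = j then 1 else 0))
          * v i * (starRingEnd ℂ) (v j)) ?_ k l
      intro w
      have expand : ∑ k : Fin n, ∑ l : Fin n, (∑ i : Fin n, ∑ j : Fin n,
          ((R i j k l - c * ∑ r : Fin n, T i k r * (starRingEnd ℂ) (T j l r))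
           + (R k l i j - c * ∑ r : Fin n, T k i r * (starRingEnd ℂ) (T l j r))
           - 2 * (κ₀ : ℂ) * (if i = l ∧ k = j then 1 else 0))
          * v i * (starRingEnd ℂ) (v j)) * w k * (starRingEnd ℂ) (w l)
        = (∑ k : Fin n, ∑ l : Fin n, ∑ i : Fin n, ∑ j : Fin n,
            (R i j k l - c * ∑ r : Fin n, T i k r * (starRingEnd ℂ) (T j l r))
              * v i * (starRingEnd ℂ) (v j) * w k * (starRingEnd ℂ) (w l))
          + (∑ k : Fin n, ∑ l : Fin n, ∑ i : Fin n, ∑ j : Fin n,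
            (R k l i j - c * ∑ r : Fin n, T k i r * (starRingEnd ℂ) (T l j r))
              * v i * (starRingEnd ℂ) (v j) * w k * (starRingEnd ℂ) (w l))
          - ∑ k : Fin n, ∑ l : Fin n, ∑ i : Fin n, ∑ j : Fin n,
            (2 * (κ₀ : ℂ) * (if i = l ∧ k = j then 1 else 0))
              * v i * (starRingEnd ℂ) (v j) * w k * (starRingEnd ℂ) (w l) := by
        simp only [add_mul, sub_mul, Finset.sum_mul, Finset.sum_add_distrib,
          Finset.sum_sub_distrib]
      have h1 : (∑ k : Fin n, ∑ l : Fin n, ∑ i : Fin n, ∑ j : Fin n,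
            (R i j k l - c * ∑ r : Fin n, T i k r * (starRingEnd ℂ) (T j l r))
              * v i * (starRingEnd ℂ) (v j) * w k * (starRingEnd ℂ) (w l))
          = ∑ i : Fin n, ∑ j : Fin n, ∑ k : Fin n, ∑ l : Fin n,
            (R i j k l - c * ∑ r : Fin n, T i k r * (starRingEnd ℂ) (T j l r))
              * (v i * (starRingEnd ℂ) (v j)) * (w k * (starRingEnd ℂ) (w l)) := by
        rw [sum_comm4 (fun i j k l =>
          (R i j k l - c * ∑ r : Fin n, T i k r * (starRingEnd ℂ) (T j l r))
            * (v i * (starRingEnd ℂ) (v j)) * (w k * (starRingEnd ℂ) (w l)))]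
        exact Finset.sum_congr rfl fun k _ => Finset.sum_congr rfl fun l _ =>
          Finset.sum_congr rfl fun i _ => Finset.sum_congr rfl fun j _ => by ring
      have h2 : (∑ k : Fin n, ∑ l : Fin n, ∑ i : Fin n, ∑ j : Fin n,
            (R k l i j - c * ∑ r : Fin n, T k i r * (starRingEnd ℂ) (T l j r))
              * v i * (starRingEnd ℂ) (v j) * w k * (starRingEnd ℂ) (w l))
          = ∑ i : Fin n, ∑ j : Fin n, ∑ k : Fin n, ∑ l : Fin n,
            (R i j k l - c * ∑ r : Fin n, T i k r * (starRingEnd ℂ) (T j l r))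
              * (w i * (starRingEnd ℂ) (w j)) * (v k * (starRingEnd ℂ) (v l)) :=
        Finset.sum_congr rfl fun k _ => Finset.sum_congr rfl fun l _ =>
          Finset.sum_congr rfl fun i _ => Finset.sum_congr rfl fun j _ => by ring
      have h3 : (∑ k : Fin n, ∑ l : Fin n, ∑ i : Fin n, ∑ j : Fin n,
            (2 * (κ₀ : ℂ) * (if i = l ∧ k = j then 1 else 0))
              * v i * (starRingEnd ℂ) (v j) * w k * (starRingEnd ℂ) (w l))
          = (κ₀ : ℂ) * ((∑ i : Fin n, ∑ j : Fin n,
              (v i * (starRingEnd ℂ) (v j)) * (w j * (starRingEnd ℂ) (w i)))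
            + ∑ i : Fin n, ∑ j : Fin n,
              (w i * (starRingEnd ℂ) (w j)) * (v j * (starRingEnd ℂ) (v i))) := by
        have hU1 : (∑ i : Fin n, ∑ j : Fin n,
              (v i * (starRingEnd ℂ) (v j)) * (w j * (starRingEnd ℂ) (w i)))
            = ∑ k : Fin n, ∑ l : Fin n,
              v l * (starRingEnd ℂ) (v k) * (w k * (starRingEnd ℂ) (w l)) := by
          rw [Finset.sum_comm]
        have hU2 : (∑ i : Fin n, ∑ j : Fin n,
              (w i * (starRingEnd ℂ) (w j)) * (v j * (starRingEnd ℂ) (v i)))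
            = ∑ k : Fin n, ∑ l : Fin n,
              v l * (starRingEnd ℂ) (v k) * (w k * (starRingEnd ℂ) (w l)) :=
          Finset.sum_congr rfl fun k _ => Finset.sum_congr rfl fun l _ => by ring
        rw [hU1, hU2, ← Finset.sum_add_distrib, Finset.mul_sum]
        refine Finset.sum_congr rfl fun k _ => ?_
        rw [← Finset.sum_add_distrib, Finset.mul_sum]
        refine Finset.sum_congr rfl fun l _ => ?_
        rw [Finset.sum_eq_single_of_mem l (Finset.mem_univ l)
          (fun b _ hb => Finset.sum_eq_zero fun j _ => by simp [hb])]
        rw [Finset.sum_eq_single_of_mem k (Finset.mem_univ k)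
          (fun b _ hb => by simp [(Ne.symm hb)])]
        norm_num
        ring
      rw [expand, h1, h2, h3, hv v w, sub_self]
    intro i j k l
    exact sesq_zero _ (fun v => step1 v k l) i j
  intro i j k l
  have hTT : (∑ r : Fin n, T k i r * (starRingEnd ℂ) (T l j r))
      = ∑ r : Fin n, T i k r * (starRingEnd ℂ) (T j l r) := by
    refine Finset.sum_congr rfl fun r _ => ?_
    rw [hT k i r, hT l j r, map_neg]
    ring
  have hhalf : (((1 - τ)/2 : ℝ) : ℂ) = 2 * c := by
    rw [hc_def]
    push_cast
    ring
  have h := hB i j k l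
  rw [hTT] at h
  rw [hhalf]
  linear_combination h
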